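/- Let C be an [n,k] binary linear code with generator matrix G_C, let θ ∈ [0,π/2], set p = (1-cos θ)/2, and define ŝ(h) = 2^{-k/2} Σ_{g ∈ F_2^k} (-1)^{h·g^T} (cos θ)^{w_H(g G_C)}. Let y_h be the codeword of the dual-complement code C^⫫ corresponding to message h (via a matrix pair A, B = (A^{-1})^T as in the complementary-code setup). Then 2^{-k/2} ŝ(h) = Σ_{z ∈ y_h ⊕ C^⊥} p^{w_H(z)} (1-p)^{n - w_H(z)}; that is, the normalized Fourier transform of the overlap function equals the probability that an i.i.d. Bernoulli(p) error vector lies in the coset y_h ⊕ C^⊥. -/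

import Mathlib

open Matrix

lemma val_one2 : ZMod.val (1 : ZMod 2) = 1 := rfl
lemma val_two2 : ZMod.val (2 : ZMod 2) = 0 := rfl
lemma zmod2_cases (a : ZMod 2) : a = 0 ∨ a = 1 := by revert a; decide

/-- Hamming weight of a binary vector. -/
def hammingWt {ι : Type*} [Fintype ι] (v : ι → ZMod 2) : ℕ :=
  (Finset.univ.filter fun i => v i ≠ 0).card

lemma chi_add (a b : ZMod 2) :
    ((-1:ℝ)) ^ ((a+b).val) = (-1:ℝ) ^ a.val * (-1:ℝ) ^ b.val := by
  rcases zmod2_cases a with rfl | rfl <;> rcases zmod2_cases b with rfl | rfl <;> simp [show ((1:ZMod 2)+1) = 0 from rfl, val_one2]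

lemma chi_sum {ι : Type*} (s : Finset ι) (f : ι → ZMod 2) :
    ((-1:ℝ)) ^ ((∑ i ∈ s, f i).val) = ∏ i ∈ s, (-1:ℝ) ^ (f i).val := by
  classical
  induction s using Finset.induction_on with
  | empty => simp
  | insert a s hni ih => rw [Finset.sum_insert hni, chi_add, ih, Finset.prod_insert hni]

lemma zmod_sum (f : ZMod 2 → ℝ) : ∑ b : ZMod 2, f b = f 0 + f 1 :=
  Fin.sum_univ_two f

lemma weight_prod {ι : Type*} [Fintype ι] [DecidableEq ι] (q : ℝ) (z : ι → ZMod 2) :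
    q ^ hammingWt z * (1-q) ^ (Fintype.card ι - hammingWt z)
      = ∏ i, (if z i ≠ 0 then q else 1-q) := by
  classical
  rw [Finset.prod_ite, Finset.prod_const, Finset.prod_const, hammingWt]
  congr 2
  have := Finset.card_filter_add_card_filter_not (s := (Finset.univ : Finset ι))
    (p := fun i => z i ≠ 0)
  simp only [Finset.card_univ] at this
  omega

lemma bernoulli_fourier {ι : Type*} [Fintype ι] [DecidableEq ι] (q : ℝ) (v : ι → ZMod 2) :
    ∑ z : ι → ZMod 2, (-1:ℝ) ^ (dotProduct v z).val *
        (q ^ hammingWt z * (1-q) ^ (Fintype.card ι - hammingWt z))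
      = (1 - 2*q) ^ hammingWt v := by
  classical
  have step : ∀ z : ι → ZMod 2, (-1:ℝ) ^ (dotProduct v z).val *
      (q ^ hammingWt z * (1-q) ^ (Fintype.card ι - hammingWt z))
      = ∏ i, ((-1:ℝ) ^ ((v i * z i).val) * (if z i ≠ 0 then q else 1-q)) := by
    intro z
    rw [dotProduct, chi_sum, weight_prod, ← Finset.prod_mul_distrib]
  simp only [step]
  rw [← Fintype.prod_sum (fun i (b : ZMod 2) => (-1:ℝ) ^ ((v i * b).val) * (if b ≠ 0 then q else 1-q))]
  have coord : ∀ c : ZMod 2,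
      (∑ b : ZMod 2, (-1:ℝ) ^ ((c * b).val) * (if b ≠ 0 then q else 1-q))
        = if c ≠ 0 then 1 - 2*q else 1 := by
    intro c
    rw [zmod_sum]
    rcases zmod2_cases c with rfl | rfl <;> simp [val_one2] <;> ring
  simp only [coord]
  rw [Finset.prod_ite, Finset.prod_const, Finset.prod_const, hammingWt, one_pow, mul_one]

lemma orth (k : ℕ) (c : Fin k → ZMod 2) :
    ∑ g : Fin k → ZMod 2, (-1:ℝ) ^ (dotProduct g c).val
      = if c = 0 then (2:ℝ)^k else 0 := by
  classical
  have step : ∀ g : Fin k → ZMod 2, (-1:ℝ) ^ (dotProduct g c).val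
      = ∏ i, (-1:ℝ) ^ ((g i * c i).val) := by
    intro g; rw [dotProduct, chi_sum]
  simp only [step]
  rw [← Fintype.prod_sum (fun i (b : ZMod 2) => (-1:ℝ) ^ ((b * c i).val))]
  have coord : ∀ d : ZMod 2,
      (∑ b : ZMod 2, (-1:ℝ) ^ ((b * d).val)) = if d = 0 then 2 else 0 := by
    intro d; rw [zmod_sum]; rcases zmod2_cases d with rfl | rfl <;> simp [val_one2] <;> norm_num
  simp only [coord]
  by_cases hc : c = 0
  · simp [hc, Finset.prod_const, Finset.card_univ]
  · rw [if_neg hc]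
    obtain ⟨i, hi⟩ : ∃ i, c i ≠ 0 := by
      by_contra hcon; push_neg at hcon; exact hc (funext hcon)
    exact Finset.prod_eq_zero (Finset.mem_univ i) (by rw [if_neg hi])

/-- With C generated by the top k rows of invertible A, B = (A⁻¹)ᵀ
with top rows generating C^⫫ and bottom rows generating C^⊥, θ ∈ [0,π/2],
p = (1-cosθ)/2, and ŝ(h) = 2^{-k/2} ∑_g (-1)^{h·g} (cosθ)^{w_H(g G_C)}:
2^{-k/2} ŝ(h) = ∑_{z ∈ y_h ⊕ C^⊥} p^{w_H(z)} (1-p)^{n-w_H(z)}, where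
y_h = h G_{C^⫫} and n = k + m. -/
theorem fourier_overlap_eq_coset_probability (k m : ℕ)
    (A : Matrix (Fin k ⊕ Fin m) (Fin k ⊕ Fin m) (ZMod 2)) (hA : IsUnit A)
    (θ p : ℝ) (hθ0 : 0 ≤ θ) (hθ1 : θ ≤ Real.pi / 2)
    (hp : p = (1 - Real.cos θ) / 2)
    (h : Fin k → ZMod 2) :
    ((Real.sqrt 2) ^ k)⁻¹ *
      (((Real.sqrt 2) ^ k)⁻¹ *
        ∑ g : Fin k → ZMod 2,
          (-1 : ℝ) ^ ((dotProduct h g).val) *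
            Real.cos θ ^ hammingWt (Matrix.vecMul g (A.submatrix Sum.inl id)))
    = ∑ u : Fin m → ZMod 2,
        p ^ hammingWt (Matrix.vecMul h (((A⁻¹)ᵀ).submatrix Sum.inl id)
              + Matrix.vecMul u (((A⁻¹)ᵀ).submatrix Sum.inr id))
          * (1 - p) ^ ((k + m) - hammingWt (Matrix.vecMul h (((A⁻¹)ᵀ).submatrix Sum.inl id)
              + Matrix.vecMul u (((A⁻¹)ᵀ).submatrix Sum.inr id))) := by
  classical
  have hdet : IsUnit A.det := (Matrix.isUnit_iff_isUnit_det A).mp hA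
  have hAiA : A⁻¹ * A = 1 := Matrix.nonsing_inv_mul A hdet
  have hAAi : A * A⁻¹ = 1 := Matrix.mul_nonsing_inv A hdet
  have hcos : Real.cos θ = 1 - 2 * p := by rw [hp]; ring
  set G : Matrix (Fin k) (Fin k ⊕ Fin m) (ZMod 2) := A.submatrix Sum.inl id with hG
  set F : ((Fin k ⊕ Fin m) → ZMod 2) → ℝ :=
    fun z => p ^ hammingWt z * (1 - p) ^ (k + m - hammingWt z) with hF
  have hcard : Fintype.card (Fin k ⊕ Fin m) = k + m := by simp
  -- Step 1: expand cos θ ^ w via Bernoulli Fourier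
  have step1 : ∀ g : Fin k → ZMod 2,
      Real.cos θ ^ hammingWt (Matrix.vecMul g G)
        = ∑ z : (Fin k ⊕ Fin m) → ZMod 2,
            (-1:ℝ) ^ (dotProduct (Matrix.vecMul g G) z).val * F z := by
    intro g
    rw [hcos, ← bernoulli_fourier p (Matrix.vecMul g G)]
    simp only [hF, hcard]
  -- Step 2: sum over g gives indicator
  have step2 : (∑ g : Fin k → ZMod 2,
      (-1 : ℝ) ^ ((dotProduct h g).val) * Real.cos θ ^ hammingWt (Matrix.vecMul g G))
      = ∑ z : (Fin k ⊕ Fin m) → ZMod 2,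
          (if G.mulVec z = h then (2:ℝ)^k else 0) * F z := by
    simp only [step1, Finset.mul_sum]
    rw [Finset.sum_comm]
    refine Finset.sum_congr rfl fun z _ => ?_
    have combine : ∀ g : Fin k → ZMod 2,
        (-1 : ℝ) ^ ((dotProduct h g).val) *
          ((-1:ℝ) ^ (dotProduct (Matrix.vecMul g G) z).val * F z)
        = (-1:ℝ) ^ (dotProduct g (h + G.mulVec z)).val * F z := by
      intro g
      rw [← mul_assoc]
      congr 1
      rw [dotProduct_add, chi_add, dotProduct_comm h g,
        dotProduct_mulVec]
    simp only [combine]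
    rw [← Finset.sum_mul, orth]
    have key : ∀ a b : ZMod 2, a + b = 0 ↔ b = a := by decide
    have hiff : (h + G.mulVec z = 0) ↔ G.mulVec z = h := by
      constructor
      · intro hc
        funext i
        exact (key _ _).mp (congrFun hc i)
      · intro hc
        funext i
        exact (key _ _).mpr (congrFun hc i)
    simp only [hiff]
  -- Step 3: reindex the z-sum by the bijection x ↦ A⁻¹.mulVec x
  let e : ((Fin k ⊕ Fin m) → ZMod 2) ≃ ((Fin k ⊕ Fin m) → ZMod 2) :=
    { toFun := fun x => A⁻¹.mulVec x
      invFun := fun z => A.mulVec z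
      left_inv := fun x => by simp only [Matrix.mulVec_mulVec, hAAi, Matrix.one_mulVec]
      right_inv := fun z => by simp only [Matrix.mulVec_mulVec, hAiA, Matrix.one_mulVec] }
  have hGA : ∀ x : (Fin k ⊕ Fin m) → ZMod 2,
      G.mulVec (A⁻¹.mulVec x) = fun a => x (Sum.inl a) := by
    intro x
    have h1 : A.mulVec (A⁻¹.mulVec x) = x := by
      rw [Matrix.mulVec_mulVec, hAAi, Matrix.one_mulVec]
    funext a
    calc G.mulVec (A⁻¹.mulVec x) a = A.mulVec (A⁻¹.mulVec x) (Sum.inl a) := rfl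
      _ = x (Sum.inl a) := by rw [h1]
  have step3 : (∑ z : (Fin k ⊕ Fin m) → ZMod 2,
        (if G.mulVec z = h then (2:ℝ)^k else 0) * F z)
      = (2:ℝ)^k * ∑ u : Fin m → ZMod 2, F (A⁻¹.mulVec (Sum.elim h u)) := by
    rw [← Equiv.sum_comp e (fun z => (if G.mulVec z = h then (2:ℝ)^k else 0) * F z)]
    have : ∀ x : (Fin k ⊕ Fin m) → ZMod 2,
        (if G.mulVec (e x) = h then (2:ℝ)^k else 0) * F (e x)
          = (if (fun a => x (Sum.inl a)) = h then (2:ℝ)^k * F (A⁻¹.mulVec x) else 0) := by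
      intro x
      have hx : e x = A⁻¹.mulVec x := rfl
      rw [hx, hGA x, ite_mul, zero_mul]
    simp only [this]
    rw [← (Equiv.sumArrowEquivProdArrow (Fin k) (Fin m) (ZMod 2)).symm.sum_comp
      (fun x => (if (fun a => x (Sum.inl a)) = h then (2:ℝ)^k * F (A⁻¹.mulVec x) else 0))]
    rw [Fintype.sum_prod_type]
    have inner : ∀ a : Fin k → ZMod 2, ∀ u : Fin m → ZMod 2,
        (if (fun i => (Equiv.sumArrowEquivProdArrow (Fin k) (Fin m) (ZMod 2)).symm (a, u) (Sum.inl i)) = h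
          then (2:ℝ)^k * F (A⁻¹.mulVec ((Equiv.sumArrowEquivProdArrow (Fin k) (Fin m) (ZMod 2)).symm (a, u))) else 0)
        = (if a = h then (2:ℝ)^k * F (A⁻¹.mulVec (Sum.elim a u)) else 0) := by
      intro a u
      simp [Equiv.sumArrowEquivProdArrow]
      rfl
    simp only [inner]
    rw [Finset.sum_comm]
    simp only [Finset.sum_ite_eq' Finset.univ h, Finset.mem_univ, if_true]
    rw [Finset.mul_sum]
  -- Step 4: identify the coset vector
  have step4 : ∀ u : Fin m → ZMod 2,
      A⁻¹.mulVec (Sum.elim h u)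
        = Matrix.vecMul h (((A⁻¹)ᵀ).submatrix Sum.inl id)
            + Matrix.vecMul u (((A⁻¹)ᵀ).submatrix Sum.inr id) := by
    intro u
    funext j
    simp [Matrix.mulVec, Matrix.vecMul, dotProduct, Fintype.sum_sum_type,
      Matrix.transpose_apply, Matrix.submatrix_apply, mul_comm]
  -- Finish
  rw [step2, step3, ← mul_assoc, ← mul_assoc]
  have hsq : ((Real.sqrt 2) ^ k)⁻¹ * ((Real.sqrt 2) ^ k)⁻¹ * (2:ℝ)^k = 1 := by
    rw [← mul_inv, ← mul_pow, Real.mul_self_sqrt (by norm_num)]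
    exact inv_mul_cancel₀ (by positivity)
  rw [hsq, one_mul]
  refine Finset.sum_congr rfl fun u _ => ?_
  rw [step4 u]
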